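/- For all u, w ∈ I_{RC}: F^{RC;uw} = (|N_C|/d_R) Σ_{v∈I_{RC}} F₁^{RC;uv} F₂^{RC;vw}. -/

import Mathlib

/-- For the concatenation `F^{h,g} = Σ_k F₁^{h,k} F₂^{k⁻¹hk, k⁻¹g}` of Kitaev
ribbon operators on a ribbon `ρ = ρ₁ρ₂`, the representation-basis operators satisfy
`F^{RC;uw} = (|N_C|/d_R) Σ_v F₁^{RC;uv} F₂^{RC;vw}`. -/
theorem quantum_double_FRC_decomposition
    {G : Type*} [Group G] [Fintype G] [DecidableEq G]
    {𝒜 : Type*} [Ring 𝒜] [Algebra ℂ 𝒜]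
    -- two families of ribbon operators and their concatenation
    (F₁ F₂ F : G → G → 𝒜)
    (hF : ∀ h g : G, F h g = ∑ k : G, F₁ h k * F₂ (k⁻¹ * h * k) (k⁻¹ * g))
    -- the conjugacy class `C = {c_1, …, c_{|C|}}`, representative `r_C`, iterators `q_i`
    (r : G) (nC : ℕ) (c : Fin nC → G) (q : Fin nC → G)
    (hcinj : Function.Injective c)
    (hcclass : ∀ g : G, IsConj r g ↔ ∃ i, c i = g)
    (hq : ∀ i, c i = q i * r * (q i)⁻¹)
    -- the centralizer `N_C` of `r_C` in `G`
    (N : Subgroup G) [Fintype N] (hN : N = Subgroup.centralizer {r})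
    -- an irreducible unitary matrix representation `R` of `N_C` of dimension `d_R`
    (dR : ℕ) (hdR : 0 < dR)
    (R : N →* Matrix (Fin dR) (Fin dR) ℂ)
    (hRunitary : ∀ m, R m * star (R m) = 1)
    (hRirr : ∀ M : Matrix (Fin dR) (Fin dR) ℂ,
      (∀ m, R m * M = M * R m) → ∃ z : ℂ, M = z • (1 : Matrix (Fin dR) (Fin dR) ℂ))
    -- the representation-basis operators for each of the three families
    (F₁RC F₂RC FRC : Fin nC × Fin dR → Fin nC × Fin dR → 𝒜)
    (hF₁RC : ∀ u v : Fin nC × Fin dR, F₁RC u v =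
      ((dR : ℂ) / (Fintype.card N : ℂ)) •
        ∑ m : N, star (R m u.2 v.2) • F₁ (c u.1)⁻¹ (q u.1 * (m : G) * (q v.1)⁻¹))
    (hF₂RC : ∀ u v : Fin nC × Fin dR, F₂RC u v =
      ((dR : ℂ) / (Fintype.card N : ℂ)) •
        ∑ m : N, star (R m u.2 v.2) • F₂ (c u.1)⁻¹ (q u.1 * (m : G) * (q v.1)⁻¹))
    (hFRC : ∀ u v : Fin nC × Fin dR, FRC u v =
      ((dR : ℂ) / (Fintype.card N : ℂ)) •
        ∑ m : N, star (R m u.2 v.2) • F (c u.1)⁻¹ (q u.1 * (m : G) * (q v.1)⁻¹)) :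
    ∀ u w : Fin nC × Fin dR,
      FRC u w = ((Fintype.card N : ℂ) / (dR : ℂ)) •
        ∑ v : Fin nC × Fin dR, F₁RC u v * F₂RC v w := by
  intro u w
  have hcardN : (Fintype.card N : ℂ) ≠ 0 := by exact_mod_cast Fintype.card_ne_zero
  have hdR' : (dR : ℂ) ≠ 0 := by exact_mod_cast hdR.ne'
  set D : ℂ := (dR : ℂ) / (Fintype.card N : ℂ) with hD
  have hDD : (Fintype.card N : ℂ) / (dR : ℂ) * (D * D) = D := by
    field_simp [hD]
    rw [hD]; field_simp
  -- centralizer commutation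
  have hcomm : ∀ p : N, r * (p : G) = (p : G) * r := by
    intro p
    have hp : (p : G) ∈ Subgroup.centralizer {r} := hN ▸ p.2
    exact Subgroup.mem_centralizer_iff.mp hp r rfl
  -- key conjugation identity
  have key : ∀ (i : Fin nC) (p : N),
      (q u.1 * (p : G) * (q i)⁻¹)⁻¹ * c u.1 * (q u.1 * (p : G) * (q i)⁻¹) = c i := by
    intro i p
    have hpr : (p : G)⁻¹ * r * (p : G) = r := by
      rw [mul_assoc, hcomm, ← mul_assoc, inv_mul_cancel, one_mul]
    calc (q u.1 * (p : G) * (q i)⁻¹)⁻¹ * c u.1 * (q u.1 * (p : G) * (q i)⁻¹)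
        = q i * ((p : G)⁻¹ * r * (p : G)) * (q i)⁻¹ := by rw [hq u.1]; group
      _ = c i := by rw [hpr, ← hq i]
  -- the bijection (i, p) ↦ q u.1 * p * (q i)⁻¹
  have hbij : Function.Bijective
      (fun x : Fin nC × N => q u.1 * (x.2 : G) * (q x.1)⁻¹) := by
    constructor
    · rintro ⟨i, p⟩ ⟨i', p'⟩ h
      simp only at h
      have hci : c i = c i' := by rw [← key i p, ← key i' p', h]
      have hii : i = i' := hcinj hci
      subst hii
      have hpp : (p : G) = (p' : G) := by
        have h2 := mul_right_cancel h
        exact mul_left_cancel h2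
      exact Prod.ext rfl (Subtype.ext hpp)
    · intro k
      have hconj : IsConj r (k⁻¹ * c u.1 * k) := by
        rw [isConj_iff]
        exact ⟨k⁻¹ * q u.1, by rw [hq u.1]; group⟩
      obtain ⟨i, hi⟩ := (hcclass _).mp hconj
      have h1 : (q u.1)⁻¹ * k * q i * r * ((q u.1)⁻¹ * k * q i)⁻¹ = r := by
        have hi' := hi
        rw [hq i, hq u.1] at hi'
        calc (q u.1)⁻¹ * k * q i * r * ((q u.1)⁻¹ * k * q i)⁻¹
            = (q u.1)⁻¹ * k * (q i * r * (q i)⁻¹) * k⁻¹ * q u.1 := by group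
          _ = (q u.1)⁻¹ * k * (k⁻¹ * (q u.1 * r * (q u.1)⁻¹) * k) * k⁻¹ * q u.1 := by
              rw [hi']
          _ = r := by group
      have hp : (q u.1)⁻¹ * k * q i ∈ N := by
        rw [hN, Subgroup.mem_centralizer_iff]
        rintro h hh
        rw [Set.mem_singleton_iff] at hh
        subst hh
        exact (mul_inv_eq_iff_eq_mul.mp h1).symm
      exact ⟨⟨i, ⟨_, hp⟩⟩, by simp only; group⟩
  -- star of product of representation matrices
  have hstar : ∀ (p n : N), star (R (p * n) u.2 w.2)
      = ∑ j : Fin dR, star (R p u.2 j) * star (R n j w.2) := by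
    intro p n
    rw [map_mul, Matrix.mul_apply, star_sum]
    exact Finset.sum_congr rfl fun j _ => star_mul' _ _
  -- the common form
  have lhs_eq : FRC u w = D • ∑ i : Fin nC, ∑ p : N, ∑ n : N, ∑ j : Fin dR,
      (star (R p u.2 j) * star (R n j w.2)) •
        (F₁ (c u.1)⁻¹ (q u.1 * (p : G) * (q i)⁻¹) *
         F₂ (c i)⁻¹ (q i * (n : G) * (q w.1)⁻¹)) := by
    rw [hFRC]
    congr 1
    simp only [hF]
    have hre : ∀ m : N,
        (∑ k : G, F₁ (c u.1)⁻¹ k *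
          F₂ (k⁻¹ * (c u.1)⁻¹ * k) (k⁻¹ * (q u.1 * (m : G) * (q w.1)⁻¹)))
        = ∑ x : Fin nC × N,
            F₁ (c u.1)⁻¹ (q u.1 * (x.2 : G) * (q x.1)⁻¹) *
            F₂ (c x.1)⁻¹ (q x.1 * ((x.2 : G)⁻¹ * (m : G)) * (q w.1)⁻¹) := by
      intro m
      refine (Fintype.sum_bijective _ hbij _ _ ?_).symm
      rintro ⟨i, p⟩
      simp only
      congr 2
      · rw [← key i p]; group
      · group
    simp only [hre, Finset.smul_sum]
    rw [Finset.sum_comm, Fintype.sum_prod_type]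
    refine Finset.sum_congr rfl fun i _ => ?_
    refine Finset.sum_congr rfl fun p _ => ?_
    have hmul : Function.Bijective (fun n : N => p * n) :=
      (Equiv.mulLeft p).bijective
    rw [show (∑ x : N, star (R x u.2 w.2) •
          (F₁ (c u.1)⁻¹ (q u.1 * (p : G) * (q i)⁻¹) *
           F₂ (c i)⁻¹ (q i * ((p : G)⁻¹ * (x : G)) * (q w.1)⁻¹)))
        = ∑ n : N, star (R (p * n) u.2 w.2) •
          (F₁ (c u.1)⁻¹ (q u.1 * (p : G) * (q i)⁻¹) *
           F₂ (c i)⁻¹ (q i * (n : G) * (q w.1)⁻¹)) from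
      (Fintype.sum_bijective (fun n : N => p * n) hmul _ _ (fun n => by
        simp [Subgroup.coe_mul, inv_mul_cancel_left])).symm]
    refine Finset.sum_congr rfl fun n _ => ?_
    rw [hstar p n, Finset.sum_smul]
  -- the right-hand side in the common form
  have rhs_eq : (((Fintype.card N : ℂ) / (dR : ℂ)) •
        ∑ v : Fin nC × Fin dR, F₁RC u v * F₂RC v w)
      = D • ∑ i : Fin nC, ∑ j : Fin dR, ∑ p : N, ∑ n : N,
          (star (R p u.2 j) * star (R n j w.2)) •
            (F₁ (c u.1)⁻¹ (q u.1 * (p : G) * (q i)⁻¹) *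
             F₂ (c i)⁻¹ (q i * (n : G) * (q w.1)⁻¹)) := by
    have hv : ∀ v : Fin nC × Fin dR, F₁RC u v * F₂RC v w
        = (D * D) • ∑ p : N, ∑ n : N,
            (star (R p u.2 v.2) * star (R n v.2 w.2)) •
              (F₁ (c u.1)⁻¹ (q u.1 * (p : G) * (q v.1)⁻¹) *
               F₂ (c v.1)⁻¹ (q v.1 * (n : G) * (q w.1)⁻¹)) := by
      intro v
      rw [hF₁RC, hF₂RC, smul_mul_smul_comm]
      congr 1
      rw [Finset.sum_mul]
      refine Finset.sum_congr rfl fun p _ => ?_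
      rw [Finset.mul_sum]
      refine Finset.sum_congr rfl fun n _ => ?_
      rw [smul_mul_smul_comm]
    simp only [hv]
    rw [← Finset.smul_sum, smul_smul, hDD]
    congr 1
    rw [Fintype.sum_prod_type]
  rw [lhs_eq, rhs_eq]
  congr 1
  refine Finset.sum_congr rfl fun i _ => ?_
  calc ∑ p : N, ∑ n : N, ∑ j : Fin dR,
        (star (R p u.2 j) * star (R n j w.2)) •
          (F₁ (c u.1)⁻¹ (q u.1 * (p : G) * (q i)⁻¹) *
           F₂ (c i)⁻¹ (q i * (n : G) * (q w.1)⁻¹))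
      = ∑ p : N, ∑ j : Fin dR, ∑ n : N,
        (star (R p u.2 j) * star (R n j w.2)) •
          (F₁ (c u.1)⁻¹ (q u.1 * (p : G) * (q i)⁻¹) *
           F₂ (c i)⁻¹ (q i * (n : G) * (q w.1)⁻¹)) :=
        Finset.sum_congr rfl fun p _ => Finset.sum_comm
    _ = _ := Finset.sum_comm
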